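/- Let f : ℝ≥0 → ℝ≥0 be a non-decreasing convex function with f(0) = 1. Then for every n ≥ 0 there exists a complex (finite, regular Borel) measure μ on the circle 𝕋 such that the Fourier coefficients satisfy μ̂(k) = f(|k|) for all integers k with |k| ≤ n, and the total variation norm satisfies ‖μ‖ ≤ f(n)². -/

import Mathlib

open MeasureTheory Finset
open scoped NNReal



/-- `b_j = g (n - j)` for `j ≤ n`, `0` otherwise. -/
def bb (g : ℕ → ℝ) (n j : ℕ) : ℝ := if j ≤ n then g (n - j) else 0

/-- second difference sequence -/
def cc (g : ℕ → ℝ) (n m : ℕ) : ℝ := bb g n (m+1) + bb g n (m-1) - 2 * bb g n m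

lemma cc_nonneg {g : ℕ → ℝ} (hmono : Monotone g)
    (hconv : ∀ a : ℕ, 2 * g (a+1) ≤ g a + g (a+2)) (hg0 : g 0 = 0)
    {n m : ℕ} (h1 : 1 ≤ m) (h2 : m ≤ n) : 0 ≤ cc g n m := by
  rcases eq_or_lt_of_le h2 with rfl | hlt
  · have hb1 : bb g m (m+1) = 0 := by simp [bb]
    have hb2 : bb g m (m-1) = g 1 := by
      unfold bb
      rw [if_pos (by omega), show m - (m-1) = 1 from by omega]
    have hb3 : bb g m m = 0 := by simp [bb, hg0]
    have : (0:ℝ) ≤ g 1 := by simpa [hg0] using hmono (Nat.zero_le 1)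
    simp [cc, hb1, hb2, hb3]; linarith
  · have e1 : bb g n (m+1) = g (n - m - 1) := by
      unfold bb
      rw [if_pos (by omega : m + 1 ≤ n), show n - (m+1) = n - m - 1 from by omega]
    have e2 : bb g n (m-1) = g (n - m + 1) := by
      unfold bb
      rw [if_pos (by omega : m - 1 ≤ n), show n - (m-1) = n - m + 1 from by omega]
    have e3 : bb g n m = g (n - m) := by simp [bb, le_of_lt hlt]
    have h := hconv (n - m - 1)
    have ha : n - m - 1 + 1 = n - m := by omega
    have hb : n - m - 1 + 2 = n - m + 1 := by omega
    rw [ha, hb] at h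
    simp only [cc, e1, e2, e3]
    linarith

/-- the key summation identity -/
lemma sum_cc (g : ℕ → ℝ) (hg0 : g 0 = 0) (n : ℕ) :
    ∀ a : ℕ, a ≤ n →
      ∑ m ∈ range (n+1), cc g n m * ((m - (n - a) : ℕ) : ℝ) = g a := by
  intro a
  induction a with
  | zero =>
    intro _
    rw [hg0]
    apply Finset.sum_eq_zero
    intro m hm
    rw [mem_range] at hm
    have : (m - (n - 0) : ℕ) = 0 := by omega
    rw [this]; simp
  | succ a ih =>
    intro ha
    have ha' : a ≤ n := by omega
    have step : ∀ m ∈ range (n+1),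
        cc g n m * ((m - (n - (a+1)) : ℕ) : ℝ)
          = cc g n m * ((m - (n - a) : ℕ) : ℝ) + (if n - a ≤ m then cc g n m else 0) := by
      intro m hm
      rw [mem_range] at hm
      by_cases h : n - a ≤ m
      · rw [if_pos h, show (m - (n - (a+1)) : ℕ) = (m - (n - a)) + 1 from by omega]
        push_cast; ring
      · rw [if_neg h, show (m - (n - (a+1)) : ℕ) = 0 from by omega,
          show (m - (n - a) : ℕ) = 0 from by omega]
        simp
    rw [Finset.sum_congr rfl step, Finset.sum_add_distrib, ih ha', ← Finset.sum_filter]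
    have hfil : (range (n+1)).filter (fun m => n - a ≤ m) = Finset.Icc (n-a) n := by
      ext m; simp [mem_range, mem_Icc]; omega
    rw [hfil]
    have hIcc : ∑ m ∈ Finset.Icc (n-a) n, cc g n m
        = ∑ i ∈ range (a+1), cc g n (n - a + i) := by
      rw [show Finset.Icc (n-a) n = Finset.Ico (n-a) (n+1) from rfl,
        Finset.sum_Ico_eq_sum_range]
      apply Finset.sum_congr
      · congr 1; omega
      · intro i _; rfl
    have hterm : ∀ i, cc g n (n - a + i)
        = (bb g n (n - a + i + 1) - bb g n (n - a + i))
          - (bb g n (n - a - 1 + i + 1) - bb g n (n - a - 1 + i)) := by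
      intro i
      have h1 : n - a + i - 1 = n - a - 1 + i := by omega
      have h2 : n - a - 1 + i + 1 = n - a + i := by omega
      simp only [cc, h1, h2]; ring
    have htel : ∑ i ∈ range (a+1), cc g n (n - a + i)
        = g (a+1) - g a := by
      have := Finset.sum_range_sub
        (fun i => bb g n (n - a + i) - bb g n (n - a - 1 + i)) (a+1)
      rw [show (∑ i ∈ range (a+1), cc g n (n - a + i))
          = ∑ i ∈ range (a+1),
            ((bb g n (n - a + (i+1)) - bb g n (n - a - 1 + (i+1)))
              - (bb g n (n - a + i) - bb g n (n - a - 1 + i))) from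
        Finset.sum_congr rfl (fun i _ => by
          rw [hterm i]
          have e1 : n - a + (i+1) = n - a + i + 1 := by omega
          have e2 : n - a - 1 + (i+1) = n - a - 1 + i + 1 := by omega
          rw [e1, e2]; ring), this]
      have b1 : bb g n (n - a + (a+1)) = 0 := by
        simp only [bb]; rw [if_neg (by omega)]
      have b2 : bb g n (n - a - 1 + (a+1)) = g 0 := by
        simp only [bb]; rw [if_pos (by omega)]; congr 1; omega
      have b3 : bb g n (n - a + 0) = g a := by
        simp only [bb]; rw [if_pos (by omega)]; congr 1; omega
      have b4 : bb g n (n - a - 1 + 0) = g (a+1) := by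
        simp only [bb]; rw [if_pos (by omega)]; congr 1; omega
      rw [b1, b2, b3, b4, hg0]; ring
    rw [hIcc, htel]; ring

/-- counting pairs -/
lemma count_pairs (m : ℕ) (d : ℤ) :
    ∑ j ∈ range m, ∑ l ∈ range m, (if d + j - l = 0 then (1:ℂ) else 0)
      = ((m - d.natAbs : ℕ) : ℂ) := by
  have inner : ∀ j : ℕ, ∑ l ∈ range m, (if d + j - l = 0 then (1:ℂ) else 0)
      = if (0 ≤ d + j ∧ (d + j).toNat < m) then 1 else 0 := by
    intro j
    by_cases h0 : 0 ≤ d + (j:ℤ)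
    · have : ∀ l : ℕ, (d + j - l = 0) ↔ (l = (d + j).toNat) := by
        intro l; omega
      rw [Finset.sum_congr rfl (fun l _ => by rw [if_congr (this l) rfl rfl])]
      rw [Finset.sum_ite_eq' (range m) ((d + (j:ℤ)).toNat) (fun _ => (1:ℂ))]
      simp only [mem_range]
      by_cases h1 : (d + (j:ℤ)).toNat < m
      · rw [if_pos h1, if_pos ⟨h0, h1⟩]
      · rw [if_neg h1, if_neg (by tauto)]
    · rw [if_neg (by tauto)]
      apply Finset.sum_eq_zero
      intro l _
      rw [if_neg (by omega)]
  rw [Finset.sum_congr rfl (fun j _ => inner j), Finset.sum_boole]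
  norm_cast
  rcases le_or_gt 0 d with hd | hd
  · have : (range m).filter (fun j : ℕ => 0 ≤ d + (j:ℤ) ∧ (d + (j:ℤ)).toNat < m)
        = range (m - d.natAbs) := by
      ext j; simp only [mem_filter, mem_range]; omega
    rw [this, Finset.card_range]
  · have : (range m).filter (fun j : ℕ => 0 ≤ d + (j:ℤ) ∧ (d + (j:ℤ)).toNat < m)
        = Finset.Ico d.natAbs m := by
      ext j; simp only [mem_filter, mem_range, Finset.mem_Ico]; omega
    rw [this, Nat.card_Ico]



open MeasureTheory Finset AddCircle
open scoped NNReal ComplexConjugate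



local instance : Fact ((0:ℝ) < 1) := ⟨one_pos⟩

noncomputable def μH : Measure (AddCircle (1:ℝ)) := haarAddCircle

instance : IsProbabilityMeasure μH := by unfold μH; infer_instance

lemma cont_integrable {E : Type*} [NormedAddCommGroup E] {h : AddCircle (1:ℝ) → E}
    (hh : Continuous h) {μ : Measure (AddCircle (1:ℝ))} [IsFiniteMeasure μ] :
    Integrable h μ :=
  hh.integrable_of_hasCompactSupport (IsClosed.isCompact (isClosed_tsupport h))

lemma norm_fourier_eq_one (t : ℤ) (x : AddCircle (1:ℝ)) : ‖fourier t x‖ = 1 := by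
  rw [fourier_apply]; exact Circle.norm_coe _

lemma int_fourier (t : ℤ) :
    ∫ x, fourier t x ∂μH = if t = 0 then 1 else 0 := by
  have h := orthonormal_iff_ite.mp (@orthonormal_fourier 1 _) 0 t
  rw [MeasureTheory.L2.inner_def] at h
  have e0 := coeFn_fourierLp (T := 1) 2 0
  have et := coeFn_fourierLp (T := 1) 2 t
  calc ∫ x, fourier t x ∂μH
      = ∫ a, (inner ℂ ((fourierLp (T := 1) 2 0 : Lp ℂ 2 haarAddCircle) a)
          ((fourierLp (T := 1) 2 t : Lp ℂ 2 haarAddCircle) a) : ℂ) ∂haarAddCircle := by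
        refine integral_congr_ae ?_
        filter_upwards [e0, et] with a h0 ht
        rw [h0, ht, RCLike.inner_apply, fourier_zero]
        simp
    _ = if (0:ℤ) = t then 1 else 0 := h
    _ = if t = 0 then 1 else 0 := by simp [eq_comm]

noncomputable def DD (m : ℕ) (x : AddCircle (1:ℝ)) : ℂ :=
  ∑ j ∈ range m, fourier (j:ℤ) x

lemma cont_DD (m : ℕ) : Continuous (DD m) := by
  unfold DD
  exact continuous_finset_sum _ (fun j _ => (fourier (j:ℤ)).continuous)

lemma int_fourier_DD (m : ℕ) (d : ℤ) :
    ∫ x, fourier d x * (DD m x * conj (DD m x)) ∂μH = ((m - d.natAbs : ℕ) : ℂ) := by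
  have expand : ∀ x : AddCircle (1:ℝ), fourier d x * (DD m x * conj (DD m x))
      = ∑ j ∈ range m, ∑ l ∈ range m, fourier (d + j - l) x := by
    intro x
    unfold DD
    rw [map_sum, Finset.sum_mul_sum, Finset.mul_sum]
    refine Finset.sum_congr rfl (fun j _ => ?_)
    rw [Finset.mul_sum]
    refine Finset.sum_congr rfl (fun l _ => ?_)
    rw [← fourier_neg, show d + (j:ℤ) - l = d + (j + -l) from by ring, fourier_add,
      fourier_add]
  simp_rw [expand]
  rw [integral_finset_sum _ (fun j _ => cont_integrable
    (continuous_finset_sum _ (fun l _ => (fourier _).continuous)))]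
  rw [Finset.sum_congr rfl (fun j _ => integral_finset_sum _
    (fun l _ => cont_integrable (fourier _).continuous))]
  simp_rw [int_fourier]
  exact count_pairs m d


section Main

open Finset AddCircle
open scoped ComplexConjugate ENNReal NNReal

/-- if `f : ℝ≥0 → ℝ≥0` is non-decreasing, convex, and `f 0 = 1`, then for
every `n` there is a complex measure `μ` on the circle `𝕋 = ℝ/ℤ` (encoded by its polar
decomposition: a finite positive measure `ρ` — its total variation — together with a
density `w` of modulus `1`) whose Fourier coefficients `μ̂(k) = ∫ z^{-k} dμ` equal
`f(|k|)` for `|k| ≤ n`, and whose total variation norm is at most `f(n)²`. -/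
theorem exists_measure_fourierCoeff_eq_convex
    (f : ℝ≥0 → ℝ≥0) (hmono : Monotone f)
    (hconv : ConvexOn ℝ≥0 Set.univ f) (hf0 : f 0 = 1) (n : ℕ) :
    ∃ (ρ : Measure (AddCircle (1 : ℝ))) (w : AddCircle (1 : ℝ) → ℂ),
      IsFiniteMeasure ρ ∧
      (∀ᵐ x ∂ρ, ‖w x‖ = 1) ∧
      (∀ k : ℤ, k.natAbs ≤ n →
        ∫ x, fourier (-k) x * w x ∂ρ = ((f (k.natAbs) : ℝ) : ℂ)) ∧
      ρ Set.univ ≤ ENNReal.ofReal ((f n : ℝ) ^ 2) := by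
  classical
  set g : ℕ → ℝ := fun a => ((f a : ℝ≥0) : ℝ) - 1 with hgdef
  have hg0 : g 0 = 0 := by simp [hgdef, hf0]
  have hgmono : Monotone g := by
    intro a b hab
    have h1 : f a ≤ f b := hmono (by exact_mod_cast hab)
    have h2 := NNReal.coe_le_coe.mpr h1
    simp only [hgdef]; linarith
  have hgconv : ∀ a : ℕ, 2 * g (a+1) ≤ g a + g (a+2) := by
    intro a
    have h := hconv.2 (Set.mem_univ ((a:ℝ≥0))) (Set.mem_univ ((a:ℝ≥0)+2))
      (by norm_num : (0:ℝ≥0) ≤ 1/2) (by norm_num : (0:ℝ≥0) ≤ 1/2)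
      (by apply NNReal.coe_injective; push_cast; norm_num)
    simp only [smul_eq_mul] at h
    rw [show (1/2 : ℝ≥0) * (a:ℝ≥0) + (1/2 : ℝ≥0) * ((a:ℝ≥0) + 2) = (((a+1:ℕ)):ℝ≥0) from by
        apply NNReal.coe_injective; push_cast; ring,
      show ((a:ℝ≥0) + 2) = (((a+2:ℕ)):ℝ≥0) from by
        apply NNReal.coe_injective; push_cast; ring] at h
    have h2 := NNReal.coe_le_coe.mpr h
    push_cast at h2
    simp only [hgdef]
    push_cast
    linarith
  set σ : AddCircle (1:ℝ) → ℝ :=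
    fun x => ∑ m ∈ Finset.range (n+1), cc g n m * Complex.normSq (DD m x) with hσdef
  have hσcont : Continuous σ := by
    apply continuous_finset_sum
    intro m _
    exact continuous_const.mul (Complex.continuous_normSq.comp (cont_DD m))
  have hσnonneg : ∀ x, 0 ≤ σ x := by
    intro x
    apply Finset.sum_nonneg
    intro m hm
    rcases Nat.eq_zero_or_pos m with rfl | hm1
    · simp [DD]
    · refine mul_nonneg (cc_nonneg hgmono hgconv hg0 hm1 ?_) (Complex.normSq_nonneg _)
      rw [mem_range] at hm; omega
  set ψ : AddCircle (1:ℝ) → ℝ := fun x => 2 * |(fourier ((n:ℤ)) x).re| * σ x with hψdef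
  have hψcont : Continuous ψ :=
    (continuous_const.mul ((continuous_abs.comp
      (Complex.continuous_re.comp (fourier ((n:ℤ))).continuous)))).mul hσcont
  have hψnonneg : ∀ x, 0 ≤ ψ x := fun x =>
    mul_nonneg (by positivity) (hσnonneg x)
  set w : AddCircle (1:ℝ) → ℂ := fun x => if 0 ≤ (fourier ((n:ℤ)) x).re then 1 else -1
    with hwdef
  have hw_meas : Measurable w := by
    refine Measurable.ite ?_ measurable_const measurable_const
    exact (isClosed_le continuous_const
      (Complex.continuous_re.comp (fourier ((n:ℤ))).continuous)).measurableSet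
  have hw_norm : ∀ x, ‖w x‖ = 1 := by
    intro x; simp only [hwdef]; split <;> simp
  set dens : AddCircle (1:ℝ) → ℝ≥0 := fun x => (ψ x).toNNReal with hdensdef
  have hdens_meas : Measurable dens := hψcont.measurable.real_toNNReal
  set ρ : Measure (AddCircle (1:ℝ)) :=
    Measure.dirac 0 + μH.withDensity (fun x => (dens x : ℝ≥0∞)) with hρdef
  -- integral of σ
  have hσint : ∫ x, σ x ∂μH = g n := by
    have hpt : ∀ x, ((σ x : ℝ) : ℂ)
        = ∑ m ∈ Finset.range (n+1),
            (cc g n m : ℂ) * (fourier (0:ℤ) x * (DD m x * conj (DD m x))) := by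
      intro x
      simp only [hσdef]
      push_cast
      refine Finset.sum_congr rfl (fun m _ => ?_)
      rw [fourier_zero, one_mul, Complex.mul_conj]
    have hC : ∫ x, ((σ x : ℝ) : ℂ) ∂μH = ((g n : ℝ) : ℂ) := by
      simp_rw [hpt]
      rw [integral_finset_sum _ (fun m _ => cont_integrable (by
        exact continuous_const.mul ((fourier (0:ℤ)).continuous.mul
          ((cont_DD m).mul (Complex.continuous_conj.comp (cont_DD m))))))]
      simp_rw [MeasureTheory.integral_const_mul, int_fourier_DD]
      rw [← sum_cc g hg0 n n le_rfl]
      push_cast [Int.natAbs_zero, Nat.sub_self, Nat.sub_zero]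
      rfl
    have hC2 : ((∫ x, σ x ∂μH : ℝ) : ℂ) = ((g n : ℝ) : ℂ) := by
      exact integral_ofReal.symm.trans hC
    exact_mod_cast hC2
  have hψle : ∀ x, ψ x ≤ 2 * σ x := by
    intro x
    have h1 : |(fourier ((n:ℤ)) x).re| ≤ 1 := by
      have h2 := Complex.abs_re_le_norm (fourier ((n:ℤ)) x)
      rw [norm_fourier_eq_one] at h2
      exact (abs_le.mp h2) |>.2 |> fun _ => by
        have := Complex.abs_re_le_norm (fourier ((n:ℤ)) x)
        rw [norm_fourier_eq_one] at this; exact this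
    have h3 := hσnonneg x
    simp only [hψdef]
    nlinarith
  have hψint_le : ∫ x, ψ x ∂μH ≤ 2 * g n := by
    have h2σ : ∫ x, 2 * σ x ∂μH = 2 * g n := by
      rw [MeasureTheory.integral_const_mul, hσint]
    rw [← h2σ]
    exact integral_mono (cont_integrable hψcont)
      (cont_integrable (continuous_const.mul hσcont)) hψle
  have hfn1 : (1:ℝ) ≤ (f n : ℝ) := by
    have h := hmono (zero_le : (0:ℝ≥0) ≤ (n:ℝ≥0))
    rw [hf0] at h
    exact_mod_cast h
  have hgn : 0 ≤ g n := by simp only [hgdef]; linarith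
  have hψint_nonneg : 0 ≤ ∫ x, ψ x ∂μH := integral_nonneg hψnonneg
  have hlint : ∫⁻ x, (dens x : ℝ≥0∞) ∂μH = ENNReal.ofReal (∫ x, ψ x ∂μH) := by
    rw [MeasureTheory.ofReal_integral_eq_lintegral_ofReal (cont_integrable hψcont)
      (Filter.Eventually.of_forall hψnonneg)]
    rfl
  have hρuniv : ρ Set.univ = 1 + ENNReal.ofReal (∫ x, ψ x ∂μH) := by
    rw [hρdef, Measure.add_apply, MeasureTheory.withDensity_apply _ MeasurableSet.univ,
      setLIntegral_univ, hlint]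
    simp
  haveI hρfin : IsFiniteMeasure ρ := by
    constructor
    rw [hρuniv]
    exact ENNReal.add_lt_top.mpr ⟨ENNReal.one_lt_top, ENNReal.ofReal_lt_top⟩
  refine ⟨ρ, w, hρfin, MeasureTheory.ae_of_all _ hw_norm, ?_, ?_⟩
  · intro k hk
    have hFmeas : Measurable (fun x => fourier (-k) x * w x) :=
      ((fourier (-k)).continuous.measurable).mul hw_meas
    have hFnorm : ∀ x : AddCircle (1:ℝ), ‖fourier (-k) x * w x‖ = 1 := by
      intro x
      rw [norm_mul, hw_norm, mul_one, norm_fourier_eq_one]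
    have hint1 : Integrable (fun x => fourier (-k) x * w x)
        (Measure.dirac (0 : AddCircle (1:ℝ))) := by
      refine Integrable.mono' (integrable_const 1) hFmeas.aestronglyMeasurable ?_
      exact MeasureTheory.ae_of_all _ (fun x => le_of_eq (hFnorm x))
    have hint2 : Integrable (fun x => fourier (-k) x * w x)
        (μH.withDensity (fun x => (dens x : ℝ≥0∞))) := by
      rw [integrable_withDensity_iff_integrable_smul hdens_meas]
      refine Integrable.mono' (cont_integrable hψcont) ?_ ?_
      · exact (hdens_meas.coe_nnreal_real.smul hFmeas).aestronglyMeasurable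
      · refine MeasureTheory.ae_of_all _ (fun x => ?_)
        rw [NNReal.smul_def, norm_smul, hFnorm, mul_one, Real.norm_eq_abs,
          abs_of_nonneg (by positivity : (0:ℝ) ≤ ((dens x : ℝ≥0) : ℝ))]
        simp only [hdensdef]
        rw [Real.coe_toNNReal _ (hψnonneg x)]
    rw [hρdef, MeasureTheory.integral_add_measure hint1 hint2, MeasureTheory.integral_dirac]
    have h0 : fourier (-k) (0 : AddCircle (1:ℝ)) * w 0 = 1 := by
      rw [fourier_eval_zero]
      simp only [hwdef]
      rw [if_pos (by rw [fourier_eval_zero]; norm_num)]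
      ring
    rw [h0, integral_withDensity_eq_integral_smul hdens_meas]
    have hx2 : ∀ x : AddCircle (1:ℝ), (((2:ℝ) * (fourier ((n:ℤ)) x).re : ℝ) : ℂ)
        = fourier ((n:ℤ)) x + fourier (-(n:ℤ)) x := by
      intro x
      rw [fourier_neg]
      exact (Complex.add_conj _).symm
    have hpt : ∀ x : AddCircle (1:ℝ), dens x • (fourier (-k) x * w x)
        = fourier (-k) x * (fourier ((n:ℤ)) x + fourier (-(n:ℤ)) x) * ((σ x : ℝ) : ℂ) := by
      intro x
      rw [NNReal.smul_def, Complex.real_smul]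
      simp only [hdensdef]
      rw [Real.coe_toNNReal _ (hψnonneg x), ← hx2 x]
      simp only [hψdef, hwdef]
      by_cases h : 0 ≤ (fourier ((n:ℤ)) x).re
      · rw [if_pos h, abs_of_nonneg h]
        push_cast
        ring
      · rw [if_neg h, abs_of_neg (not_le.mp h)]
        push_cast
        ring
    simp only [hpt]
    have hdint : ∀ d : ℤ, ∫ x, fourier d x * ((σ x : ℝ) : ℂ) ∂μH
        = ∑ m ∈ Finset.range (n+1), (cc g n m : ℂ) * ((m - d.natAbs : ℕ) : ℂ) := by
      intro d
      have hpt2 : ∀ x : AddCircle (1:ℝ), fourier d x * ((σ x : ℝ):ℂ)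
          = ∑ m ∈ Finset.range (n+1),
              (cc g n m : ℂ) * (fourier d x * (DD m x * conj (DD m x))) := by
        intro x
        simp only [hσdef]
        push_cast
        rw [Finset.mul_sum]
        refine Finset.sum_congr rfl (fun m _ => ?_)
        rw [Complex.mul_conj]
        push_cast
        ring
      simp_rw [hpt2]
      rw [integral_finset_sum _ (fun m _ => cont_integrable (by
        exact continuous_const.mul ((fourier d).continuous.mul
          ((cont_DD m).mul (Complex.continuous_conj.comp (cont_DD m))))))]
      simp_rw [MeasureTheory.integral_const_mul, int_fourier_DD]
    have hsplit : ∀ x : AddCircle (1:ℝ),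
        fourier (-k) x * (fourier ((n:ℤ)) x + fourier (-(n:ℤ)) x) * ((σ x : ℝ):ℂ)
        = fourier ((n:ℤ) - k) x * ((σ x : ℝ):ℂ)
          + fourier (-(n:ℤ) - k) x * ((σ x : ℝ):ℂ) := by
      intro x
      rw [show (n:ℤ) - k = -k + n from by ring, show -(n:ℤ) - k = -k + -(n:ℤ) from by ring,
        fourier_add, fourier_add]
      ring
    simp only [hsplit]
    have hi1 : MeasureTheory.Integrable (fun x => fourier ((n:ℤ) - k) x * ((σ x : ℝ):ℂ)) μH :=
      cont_integrable ((fourier _).continuous.mul (Complex.continuous_ofReal.comp hσcont))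
    have hi2 : MeasureTheory.Integrable (fun x => fourier (-(n:ℤ) - k) x * ((σ x : ℝ):ℂ)) μH :=
      cont_integrable ((fourier _).continuous.mul (Complex.continuous_ofReal.comp hσcont))
    rw [MeasureTheory.integral_add hi1 hi2, hdint, hdint]
    set a := k.natAbs with hadef
    have hmain : ∑ m ∈ Finset.range (n+1), (cc g n m : ℂ) * ((m - (n - a) : ℕ):ℂ)
        = ((g a : ℝ):ℂ) := by
      rw [← sum_cc g hg0 n a hk]
      push_cast
      rfl
    have hzero : ∑ m ∈ Finset.range (n+1), (cc g n m : ℂ) * ((m - (n + a) : ℕ):ℂ) = 0 := by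
      refine Finset.sum_eq_zero (fun m hm => ?_)
      rw [Finset.mem_range] at hm
      rw [show (m - (n + a) : ℕ) = 0 from by omega]
      simp
    have hcase : (((n:ℤ) - k).natAbs = n - a ∧ (-(n:ℤ) - k).natAbs = n + a)
        ∨ (((n:ℤ) - k).natAbs = n + a ∧ (-(n:ℤ) - k).natAbs = n - a) := by
      simp only [hadef]
      omega
    have hfin : (1 : ℂ) + ((g a : ℝ):ℂ) = ((f (a : ℝ≥0) : ℝ) : ℂ) := by
      simp only [hgdef]
      push_cast
      ring
    rcases hcase with ⟨e1, e2⟩ | ⟨e1, e2⟩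
    · rw [e1, e2, hmain, hzero, add_zero, hfin]
    · rw [e1, e2, hmain, hzero, zero_add, hfin]
  · rw [hρuniv]
    have : (1 : ℝ≥0∞) + ENNReal.ofReal (∫ x, ψ x ∂μH)
        = ENNReal.ofReal (1 + ∫ x, ψ x ∂μH) := by
      rw [ENNReal.ofReal_add (by norm_num) hψint_nonneg, ENNReal.ofReal_one]
    rw [this]
    refine ENNReal.ofReal_le_ofReal ?_
    have hgn' : g n = ((f n : ℝ≥0) : ℝ) - 1 := by simp [hgdef]
    nlinarith [hψint_le, hgn, hfn1, sq_nonneg (((f n : ℝ≥0) : ℝ) - 1)]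
end Main
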